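/- For all positive reals a and b, (a-b)(log a - log b) ≥ (a-b)²/(a+b). -/

import Mathlib

lemma aux_log_diff (a b : ℝ) (ha : 0 < a) (hb : 0 < b) (hba : b ≤ a) :
    (a - b) * (Real.log a - Real.log b) ≥ (a - b)^2 / (a + b) := by
  have hd : 0 ≤ a - b := by linarith
  have h1 : Real.log (b / a) ≤ b / a - 1 := Real.log_le_sub_one_of_pos (by positivity)
  have h2 : Real.log (b / a) = Real.log b - Real.log a := Real.log_div hb.ne' ha.ne'
  have h3 : (a - b) / a ≤ Real.log a - Real.log b := by
    rw [h2] at h1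
    have he : b / a - 1 = -((a - b) / a) := by field_simp; ring
    rw [he] at h1
    linarith
  have h4 : (a - b) / (a + b) ≤ (a - b) / a :=
    div_le_div_of_nonneg_left hd ha (by linarith)
  have h5 : (a - b) * ((a - b) / (a + b)) ≤ (a - b) * (Real.log a - Real.log b) :=
    mul_le_mul_of_nonneg_left (h4.trans h3) hd
  calc (a - b)^2 / (a + b) = (a - b) * ((a - b) / (a + b)) := by ring
    _ ≤ (a - b) * (Real.log a - Real.log b) := h5

theorem log_diff_ge_sq_div_sum (a b : ℝ) (ha : 0 < a) (hb : 0 < b) :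
    (a - b) * (Real.log a - Real.log b) ≥ (a - b)^2 / (a + b) := by
  rcases le_total b a with h | h
  · exact aux_log_diff a b ha hb h
  · have := aux_log_diff b a hb ha h
    have e1 : (b - a) * (Real.log b - Real.log a)
        = (a - b) * (Real.log a - Real.log b) := by ring
    have e2 : (b - a)^2 / (b + a) = (a - b)^2 / (a + b) := by rw [add_comm]; ring_nf
    rw [e1, e2] at this
    exact this
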